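/- After encoding with rANS, the decoded value of S' mod 2^M lies in the correct symbol's interval: if S' = 2^M · ⌊S/P_x⌋ + C_x + (S mod P_x) with 0 < P_x and C_x + P_x ≤ 2^M, then C_x ≤ S' mod 2^M < C_x + P_x. -/
import Mathlib


/-- After rANS encoding, `S' mod 2^M` lies in the correct symbol's interval. -/
theorem rans_encoded_state_in_interval
    (M S Px Cx : ℕ) (hP : 0 < Px) (hCP : Cx + Px ≤ 2 ^ M)
    (S' : ℕ) (hS' : S' = 2 ^ M * (S / Px) + Cx + S % Px) :
    Cx ≤ S' % 2 ^ M ∧ S' % 2 ^ M < Cx + Px := by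
  have hmod : S % Px < Px := Nat.mod_lt _ hP
  have hlt : Cx + S % Px < 2 ^ M := lt_of_lt_of_le (by omega) hCP
  have : S' % 2 ^ M = Cx + S % Px := by
    rw [hS', add_assoc, Nat.mul_add_mod, Nat.mod_eq_of_lt hlt]
  omega
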